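/- Let G be a series-parallel graph recursively built from single edges via series and parallel combinations, and for each component H let s(H) = min(p, size of the largest edge-antichain in H). Then the number of parallel combinations (G₁,G₂) in the recursive construction with s(G₁) = s(G₂) = p is at most |E|/p. -/
import Mathlib


/-- Series-parallel DAGs, represented by their recursive construction from
single edges via series and parallel combinations. -/
inductive SP where
  | edge : SP
  | series : SP → SP → SP
  | parallel : SP → SP → SP

/-- Number of edges of a series-parallel DAG. -/
def SP.edges : SP → ℕ
  | .edge => 1
  | .series a b => a.edges + b.edges
  | .parallel a b => a.edges + b.edges

/-- s(H) = min(p, size of the largest edge-antichain of H): a single edge has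
antichain size 1; a series combination takes the max; a parallel combination
takes the (capped) sum. -/
def SP.s (p : ℕ) : SP → ℕ
  | .edge => min 1 p
  | .series a b => max (a.s p) (b.s p)
  | .parallel a b => min (a.s p + b.s p) p

/-- Number of fully-formed parallel combinations, i.e. parallel combinations
(G₁,G₂) in the recursive construction with s(G₁) = s(G₂) = p. -/
def SP.ffCount (p : ℕ) : SP → ℕ
  | .edge => 0
  | .series a b => a.ffCount p + b.ffCount p
  | .parallel a b => a.ffCount p + b.ffCount p + (if a.s p = p ∧ b.s p = p then 1 else 0)

/-- The number of fully-formed parallel combinations in the recursive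
construction of G is at most |E|/p. -/
theorem SP.aux (p : ℕ) (hp : 0 < p) (G : SP) :
    p * G.ffCount p + G.s p ≤ G.edges := by
  induction G with
  | edge => simp [SP.ffCount, SP.s, SP.edges, hp]
  | series a b iha ihb =>
      simp only [SP.ffCount, SP.s, SP.edges, Nat.mul_add]
      omega
  | parallel a b iha ihb =>
      simp only [SP.ffCount, SP.s, SP.edges, Nat.mul_add]
      split <;> omega

theorem stmt3 (p : ℕ) (hp : 0 < p) (G : SP) :
    p * G.ffCount p ≤ G.edges := by
  have := SP.aux p hp G
  omega
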